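/- Let F be a field of characteristic 2. Suppose a, b, c, d, a', b', c', d' ∈ F× satisfy {a,b}₂ = {a',b'}₂ ≠ 0 and {c,d}₂ = {c',d'}₂ ≠ 0 in K₂(F)/2K₂(F). Then F²(a,b) = F²(a',b') and F²(c,d) = F²(c',d'), hence F²(a,b,c,d) = F²(a',b',c',d'). -/

import Mathlib

namespace Milnor

variable (F : Type*) [Field F]

/-- Relations defining the Milnor K-group `K_n(F)`: multiplicativity in each
slot and the Steinberg relation. -/
def rels (n : ℕ) : AddSubgroup (FreeAbelianGroup (Fin n → Fˣ)) :=
  AddSubgroup.closure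
    ({ x | ∃ (i : Fin n) (u v w : Fin n → Fˣ),
        (∀ j, j ≠ i → u j = v j ∧ u j = w j) ∧ w i = u i * v i ∧
        x = FreeAbelianGroup.of w - FreeAbelianGroup.of u - FreeAbelianGroup.of v } ∪
     { x | ∃ (i j : Fin n) (u : Fin n → Fˣ), i ≠ j ∧ (u i : F) + (u j : F) = 1 ∧
        x = FreeAbelianGroup.of u })

/-- The Milnor K-group `K_n(F)`. -/
def K (n : ℕ) := FreeAbelianGroup (Fin n → Fˣ) ⧸ rels F n

instance (n : ℕ) : AddCommGroup (K F n) :=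
  QuotientAddGroup.Quotient.addCommGroup _

/-- The subgroup `2^m K_n(F)` of `K_n(F)`. -/
def modSub (n m : ℕ) : AddSubgroup (K F n) :=
  AddSubgroup.closure { x | ∃ y : K F n, x = (2 ^ m) • y }

/-- The quotient `K_n(F)/2^m K_n(F)`. -/
def KMod (n m : ℕ) := K F n ⧸ modSub F n m

instance (n m : ℕ) : AddCommGroup (KMod F n m) :=
  QuotientAddGroup.Quotient.addCommGroup _

variable {F}

/-- The class of the symbol `{v 0, …, v (n-1)}` in `K_n(F)/2^m K_n(F)`. -/
def symbol {n : ℕ} (m : ℕ) (v : Fin n → Fˣ) : KMod F n m :=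
  QuotientAddGroup.mk (QuotientAddGroup.mk (FreeAbelianGroup.of v) : K F n)

open scoped Classical in
/-- `{a,b}` in `K₂(F)/2^m K₂(F)` for field elements, with junk value `0` if an
entry vanishes.  So `s2 1 a b` is `{a,b}₂` and `s2 2 a b` is `{a,b}₄`. -/
noncomputable def s2 (m : ℕ) (a b : F) : KMod F 2 m :=
  if h : a ≠ 0 ∧ b ≠ 0 then symbol m ![Units.mk0 a h.1, Units.mk0 b h.2] else 0

open scoped Classical in
/-- `{a,b,c,d}` in `K₄(F)/2^m K₄(F)` for field elements, junk value `0`. -/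
noncomputable def s4 (m : ℕ) (a b c d : F) : KMod F 4 m :=
  if h : a ≠ 0 ∧ b ≠ 0 ∧ c ≠ 0 ∧ d ≠ 0 then
    symbol m ![Units.mk0 a h.1, Units.mk0 b h.2.1, Units.mk0 c h.2.2.1, Units.mk0 d h.2.2.2]
  else 0

end Milnor

open Milnor



section Deriv
variable {F : Type*} [Field F]

/-- Adjoin one element to a subfield of a field where all squares lie in the subfield. -/
def adjOne (M : Subfield F) (hsq : ∀ z : F, z ^ 2 ∈ M) (x : F) : Subfield F where
  carrier := {y | ∃ p ∈ M, ∃ q ∈ M, y = p + q * x}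
  zero_mem' := ⟨0, M.zero_mem, 0, M.zero_mem, by ring⟩
  one_mem' := ⟨1, M.one_mem, 0, M.zero_mem, by ring⟩
  add_mem' := by
    rintro _ _ ⟨p, hp, q, hq, rfl⟩ ⟨p', hp', q', hq', rfl⟩
    exact ⟨p + p', M.add_mem hp hp', q + q', M.add_mem hq hq', by ring⟩
  neg_mem' := by
    rintro y ⟨p, hp, q, hq, rfl⟩
    exact ⟨-p, M.neg_mem hp, -q, M.neg_mem hq, by ring⟩
  mul_mem' := by
    rintro _ _ ⟨p, hp, q, hq, rfl⟩ ⟨p', hp', q', hq', rfl⟩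
    exact ⟨p * p' + q * q' * x ^ 2, M.add_mem (M.mul_mem hp hp')
        (M.mul_mem (M.mul_mem hq hq') (hsq x)),
      p * q' + q * p', M.add_mem (M.mul_mem hp hq') (M.mul_mem hq hp'), by ring⟩
  inv_mem' := by
    rintro y ⟨p, hp, q, hq, rfl⟩
    by_cases hy : p + q * x = 0
    · rw [hy, inv_zero]; exact ⟨0, M.zero_mem, 0, M.zero_mem, by ring⟩
    · have hm : ((p + q * x) ^ 2)⁻¹ ∈ M := M.inv_mem (hsq _)
      refine ⟨p * ((p + q * x) ^ 2)⁻¹, M.mul_mem hp hm,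
        q * ((p + q * x) ^ 2)⁻¹, M.mul_mem hq hm, ?_⟩
      field_simp

theorem mem_adjOne_self (M : Subfield F) (hsq : ∀ z : F, z ^ 2 ∈ M) (x : F) :
    x ∈ adjOne M hsq x := ⟨0, M.zero_mem, 1, M.one_mem, by ring⟩

theorem le_adjOne (M : Subfield F) (hsq : ∀ z : F, z ^ 2 ∈ M) (x : F) :
    M ≤ adjOne M hsq x := fun y hy => ⟨y, hy, 0, M.zero_mem, by ring⟩

/-- Existence of a derivation vanishing on a given subfield `K ⊇ F²` with `D a = 1`. -/
theorem exists_deriv [CharP F 2] (K : Subfield F) (hsq : ∀ z : F, z ^ 2 ∈ K) {a : F}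
    (ha : a ∉ K) :
    ∃ D : F → F, (∀ x y, D (x + y) = D x + D y) ∧
      (∀ x y, D (x * y) = x * D y + y * D x) ∧ (∀ x ∈ K, D x = 0) ∧ D a = 1 := by
  obtain ⟨M, hKM, hMmax⟩ := zorn_le_nonempty₀ {M : Subfield F | K ≤ M ∧ a ∉ M}
    (fun c hc hchain y hy => by
      refine ⟨sSup c, ⟨le_trans (hc hy).1 (le_sSup hy), fun hmem => ?_⟩,
        fun z hz => le_sSup hz⟩
      obtain ⟨s, hs, has⟩ := (Subfield.mem_sSup_of_directedOn ⟨y, hy⟩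
        hchain.directedOn).1 hmem
      exact (hc hs).2 has) K ⟨le_refl K, ha⟩
  have hKle : K ≤ M := hMmax.prop.1
  have haM : a ∉ M := hMmax.prop.2
  have hsqM : ∀ z : F, z ^ 2 ∈ M := fun z => hKle (hsq z)
  -- decomposition
  have hdec : ∀ x : F, ∃ q : F, q ∈ M ∧ ∃ p ∈ M, x = p + q * a := by
    intro x
    by_cases hx : x ∈ M
    · exact ⟨0, M.zero_mem, x, hx, by ring⟩
    · have hNa : a ∈ adjOne M hsqM x := by
        by_contra hna
        have hle : adjOne M hsqM x ≤ M :=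
          hMmax.le_of_ge ⟨le_trans hKle (le_adjOne M hsqM x), hna⟩
            (le_adjOne M hsqM x)
        exact hx (hle (mem_adjOne_self M hsqM x))
      obtain ⟨p, hp, q, hq, hpq⟩ := hNa
      have hq0 : q ≠ 0 := by
        rintro rfl
        exact haM (by rw [hpq]; simpa using hp)
      refine ⟨q⁻¹, M.inv_mem hq, -(p * q⁻¹), M.neg_mem (M.mul_mem hp (M.inv_mem hq)), ?_⟩
      field_simp
      linear_combination (-1 : F) * hpq
  -- uniqueness of the coefficient
  have huniq : ∀ x p q, p ∈ M → q ∈ M → x = p + q * a →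
      q = (hdec x).choose := by
    intro x p q hp hq hx
    obtain ⟨hq', p', hp', hx'⟩ := (hdec x).choose_spec
    by_contra hne
    apply haM
    have : (q - (hdec x).choose) * a = p' - p := by
      linear_combination hx' - hx
    have hne' : q - (hdec x).choose ≠ 0 := sub_ne_zero.2 hne
    have ha2 : a = (q - (hdec x).choose)⁻¹ * (p' - p) := by
      rw [← this, inv_mul_cancel_left₀ hne']
    rw [ha2]
    exact M.mul_mem (M.inv_mem (M.sub_mem hq hq')) (M.sub_mem hp' hp)
  set D : F → F := fun x => (hdec x).choose with hD
  have hspec : ∀ x : F, D x ∈ M ∧ ∃ p ∈ M, x = p + D x * a := fun x => (hdec x).choose_spec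
  have hval : ∀ x p q, p ∈ M → q ∈ M → x = p + q * a → D x = q :=
    fun x p q hp hq hx => (huniq x p q hp hq hx).symm
  have h2 : (2 : F) = 0 := by
    have := CharP.cast_eq_zero F 2; simpa using this
  refine ⟨D, ?_, ?_, ?_, ?_⟩
  · intro x y
    obtain ⟨hx1, p, hp, hx⟩ := hspec x
    obtain ⟨hy1, p', hp', hy⟩ := hspec y
    exact hval (x + y) (p + p') (D x + D y) (M.add_mem hp hp') (M.add_mem hx1 hy1)
      (by linear_combination hx + hy)
  · intro x y
    obtain ⟨hx1, p, hp, hx⟩ := hspec x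
    obtain ⟨hy1, p', hp', hy⟩ := hspec y
    have : D (x * y) = p * D y + p' * D x := by
      refine hval (x * y) (p * p' + D x * D y * a ^ 2) (p * D y + p' * D x)
        (M.add_mem (M.mul_mem hp hp') (M.mul_mem (M.mul_mem hx1 hy1) (hsqM a)))
        (M.add_mem (M.mul_mem hp hy1) (M.mul_mem hp' hx1)) ?_
      linear_combination y * hx + (p + D x * a) * hy
    rw [this]
    linear_combination (-(D y)) * hx + (-(D x)) * hy + (-(a * D x * D y)) * h2
  · intro x hx
    exact hval x x 0 (hKle hx) M.zero_mem (by ring)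
  · exact hval a 0 1 M.zero_mem M.one_mem (by ring)

end Deriv


namespace MilnorAux

variable {F : Type*} [Field F]

/-- logarithmic derivative on units -/
noncomputable def Ldlog (D : F → F) (u : Fˣ) : F := D (u : F) * ((u : F))⁻¹

theorem deriv_one {D : F → F} (hm : ∀ x y, D (x * y) = x * D y + y * D x) : D 1 = 0 := by
  have := hm 1 1
  rw [mul_one, one_mul] at this
  exact left_eq_add.mp this

theorem Ldlog_mul {D : F → F} (hm : ∀ x y, D (x * y) = x * D y + y * D x) (u v : Fˣ) :
    Ldlog D (u * v) = Ldlog D u + Ldlog D v := by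
  unfold Ldlog
  rw [Units.val_mul, hm]
  have hu : ((u : F)) ≠ 0 := Units.ne_zero u
  have hv : ((v : F)) ≠ 0 := Units.ne_zero v
  field_simp
  ring

variable [CharP F 2]

theorem deriv_steinberg {D : F → F} (ha : ∀ x y, D (x + y) = D x + D y)
    (hm : ∀ x y, D (x * y) = x * D y + y * D x) {x y : F} (h : x + y = 1) : D y = D x := by
  have h0 : D x + D y = 0 := by rw [← ha, h, deriv_one hm]
  have h1 := eq_neg_of_add_eq_zero_right h0
  rw [CharTwo.neg_eq] at h1
  exact h1

theorem exists_psi (D₁ D₂ : F → F)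
    (h₁a : ∀ x y, D₁ (x + y) = D₁ x + D₁ y) (h₁m : ∀ x y, D₁ (x * y) = x * D₁ y + y * D₁ x)
    (h₂a : ∀ x y, D₂ (x + y) = D₂ x + D₂ y) (h₂m : ∀ x y, D₂ (x * y) = x * D₂ y + y * D₂ x) :
    ∃ ψ : KMod F 2 1 →+ F, ∀ v : Fin 2 → Fˣ,
      ψ (symbol 1 v) = Ldlog D₁ (v 0) * Ldlog D₂ (v 1) + Ldlog D₂ (v 0) * Ldlog D₁ (v 1) := by
  have h2 : (2 : F) = 0 := by
    have := CharP.cast_eq_zero F 2; simpa using this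
  set f : (Fin 2 → Fˣ) → F := fun v =>
    Ldlog D₁ (v 0) * Ldlog D₂ (v 1) + Ldlog D₂ (v 0) * Ldlog D₁ (v 1) with hf
  set φ : FreeAbelianGroup (Fin 2 → Fˣ) →+ F := FreeAbelianGroup.lift f with hφ
  have hφof : ∀ v, φ (FreeAbelianGroup.of v) = f v := fun v => FreeAbelianGroup.lift_apply_of f v
  have hrels : rels F 2 ≤ φ.ker := by
    rw [rels, AddSubgroup.closure_le]
    rintro x (⟨i, u, v, w, hj, hi, rfl⟩ | ⟨i, j, u, hij, h1, rfl⟩)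
    · simp only [SetLike.mem_coe, AddMonoidHom.mem_ker, map_sub, hφof]
      rcases (by omega : i = 0 ∨ i = 1) with rfl | rfl
      · obtain ⟨e1, e2⟩ := hj 1 (by decide)
        simp only [hf]
        rw [hi, ← e1, ← e2, Ldlog_mul h₁m, Ldlog_mul h₂m]
        ring
      · obtain ⟨e1, e2⟩ := hj 0 (by decide)
        simp only [hf]
        rw [hi, ← e1, ← e2, Ldlog_mul h₁m, Ldlog_mul h₂m]
        ring
    · simp only [SetLike.mem_coe, AddMonoidHom.mem_ker, hφof]
      simp only [hf]
      rcases (by omega : i = 0 ∨ i = 1) with rfl | rfl <;>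
        rcases (by omega : j = 0 ∨ j = 1) with rfl | rfl
      · exact absurd rfl hij
      · have e1 : D₁ (u 1 : F) = D₁ (u 0 : F) := deriv_steinberg h₁a h₁m h1
        have e2 : D₂ (u 1 : F) = D₂ (u 0 : F) := deriv_steinberg h₂a h₂m h1
        unfold Ldlog
        rw [e1, e2]
        linear_combination (((u 0 : F))⁻¹ * ((u 1 : F))⁻¹ * D₁ (u 0 : F) * D₂ (u 0 : F)) * h2
      · have e1 : D₁ (u 0 : F) = D₁ (u 1 : F) := deriv_steinberg h₁a h₁m h1
        have e2 : D₂ (u 0 : F) = D₂ (u 1 : F) := deriv_steinberg h₂a h₂m h1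
        unfold Ldlog
        rw [e1, e2]
        linear_combination (((u 0 : F))⁻¹ * ((u 1 : F))⁻¹ * D₁ (u 1 : F) * D₂ (u 1 : F)) * h2
      · exact absurd rfl hij
  set ψK : K F 2 →+ F := QuotientAddGroup.lift (rels F 2) φ hrels with hψK
  have hmod : modSub F 2 1 ≤ ψK.ker := by
    rw [modSub, AddSubgroup.closure_le]
    rintro x ⟨y, rfl⟩
    simp only [SetLike.mem_coe, AddMonoidHom.mem_ker]
    rw [map_nsmul]
    rw [pow_one, two_nsmul]
    exact CharTwo.add_self_eq_zero _
  exact ⟨QuotientAddGroup.lift (modSub F 2 1) ψK hmod, fun v => by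
    show ψK (QuotientAddGroup.mk (FreeAbelianGroup.of v)) = _
    show φ (FreeAbelianGroup.of v) = _
    exact hφof v⟩

end MilnorAux

namespace MilnorAux

variable {F : Type*} [Field F]

def sym (u v : Fˣ) : KMod F 2 1 := symbol 1 ![u, v]

theorem mkmk_eq {x y : FreeAbelianGroup (Fin 2 → Fˣ)} (h : x - y ∈ rels F 2) :
    (QuotientAddGroup.mk (QuotientAddGroup.mk x : K F 2) : KMod F 2 1)
      = QuotientAddGroup.mk (QuotientAddGroup.mk y : K F 2) :=
  congrArg _ (QuotientAddGroup.eq_iff_sub_mem.mpr h)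

theorem kmod_two (x : KMod F 2 1) : x + x = 0 := by
  refine QuotientAddGroup.induction_on x fun z => ?_
  refine QuotientAddGroup.induction_on z fun w => ?_
  show (QuotientAddGroup.mk (QuotientAddGroup.mk w + QuotientAddGroup.mk w : K F 2)
    : KMod F 2 1) = 0
  rw [QuotientAddGroup.eq_zero_iff]
  exact AddSubgroup.subset_closure
    ⟨QuotientAddGroup.mk w, by rw [pow_one]; exact (two_nsmul _).symm⟩

theorem eq_of_add_eq_zero {x y : KMod F 2 1} (h : x + y = 0) : x = y := by
  have h2 := kmod_two y
  calc x = x + (y + y) := by rw [h2, add_zero]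
    _ = (x + y) + y := by abel
    _ = y := by rw [h, zero_add]

theorem sym_mul_left (u u' v : Fˣ) : sym (u * u') v = sym u v + sym u' v := by
  have hrel : FreeAbelianGroup.of ![u * u', v]
      - (FreeAbelianGroup.of ![u, v] + FreeAbelianGroup.of ![u', v]) ∈ rels F 2 := by
    have h : FreeAbelianGroup.of ![u * u', v] - FreeAbelianGroup.of ![u, v]
        - FreeAbelianGroup.of ![u', v] ∈ rels F 2 := by
      refine AddSubgroup.subset_closure (Or.inl ⟨0, ![u, v], ![u', v], ![u * u', v],
        fun j hj => ?_, by simp, rfl⟩)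
      rcases (by omega : j = 0 ∨ j = 1) with rfl | rfl
      · exact absurd rfl hj
      · simp
    rwa [sub_sub] at h
  exact mkmk_eq hrel

theorem sym_mul_right (u v v' : Fˣ) : sym u (v * v') = sym u v + sym u v' := by
  have hrel : FreeAbelianGroup.of ![u, v * v']
      - (FreeAbelianGroup.of ![u, v] + FreeAbelianGroup.of ![u, v']) ∈ rels F 2 := by
    have h : FreeAbelianGroup.of ![u, v * v'] - FreeAbelianGroup.of ![u, v]
        - FreeAbelianGroup.of ![u, v'] ∈ rels F 2 := by
      refine AddSubgroup.subset_closure (Or.inl ⟨1, ![u, v], ![u, v'], ![u, v * v'],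
        fun j hj => ?_, by simp, rfl⟩)
      rcases (by omega : j = 0 ∨ j = 1) with rfl | rfl
      · simp
      · exact absurd rfl hj
    rwa [sub_sub] at h
  exact mkmk_eq hrel

theorem sym_steinberg {u v : Fˣ} (h : (u : F) + (v : F) = 1) : sym u v = 0 := by
  have hrel : FreeAbelianGroup.of ![u, v] ∈ rels F 2 :=
    AddSubgroup.subset_closure (Or.inr ⟨0, 1, ![u, v], by decide, by simpa using h, rfl⟩)
  show (QuotientAddGroup.mk (QuotientAddGroup.mk (FreeAbelianGroup.of ![u, v]) : K F 2)
    : KMod F 2 1) = 0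
  rw [show (QuotientAddGroup.mk (FreeAbelianGroup.of ![u, v]) : K F 2) = 0 from
    (QuotientAddGroup.eq_zero_iff _).mpr hrel]
  rfl

theorem sym_one_left (v : Fˣ) : sym 1 v = 0 := by
  have h := sym_mul_left 1 1 v
  rw [one_mul] at h
  exact left_eq_add.mp h

theorem sym_inv_left (u v : Fˣ) : sym u⁻¹ v = sym u v :=
  eq_of_add_eq_zero (by rw [← sym_mul_left, inv_mul_cancel, sym_one_left])

variable [CharP F 2]

theorem char_two_f (F : Type*) [Field F] [CharP F 2] : (2 : F) = 0 := by
  have := CharP.cast_eq_zero F 2; simpa using this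

theorem sym_self (u : Fˣ) : sym u u = 0 := by
  by_cases hu : (u : F) = 1
  · rw [show u = 1 from Units.ext hu, sym_one_left]
  · have h1 : (u : F) + 1 ≠ 0 := by
      intro h
      apply hu
      have := eq_neg_of_add_eq_zero_left h
      rwa [CharTwo.neg_eq] at this
    set w : Fˣ := Units.mk0 ((u : F) + 1) h1 with hw
    set w' : Fˣ := u⁻¹ * w with hw'
    have hst1 : (u : F) + (w : F) = 1 := by
      rw [hw]
      simp only [Units.val_mk0]
      linear_combination (u : F) * char_two_f (F := F)
    have huw : sym u w = 0 := sym_steinberg hst1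
    have huu : (u : F) * ((u : F))⁻¹ = 1 := mul_inv_cancel₀ (Units.ne_zero u)
    have hst2 : ((u⁻¹ : Fˣ) : F) + (w' : F) = 1 := by
      rw [hw', hw]
      simp only [Units.val_mul, Units.val_mk0, Units.val_inv_eq_inv_val]
      linear_combination huu + ((u : F))⁻¹ * char_two_f (F := F)
    have h2' : sym u⁻¹ w' = 0 := sym_steinberg hst2
    have h3' : sym u w' = 0 := by rw [← sym_inv_left]; exact h2'
    have hwfact : w = u * w' := by rw [hw', mul_inv_cancel_left]
    have h4 := sym_mul_right u u w'
    rw [← hwfact, huw, h3', add_zero] at h4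
    exact h4.symm

theorem sym_comm (u v : Fˣ) : sym u v = sym v u := by
  have h : sym u (u * v) + sym v (u * v) = 0 := by
    rw [← sym_mul_left, sym_self]
  rw [sym_mul_right, sym_mul_right, sym_self, sym_self, zero_add, add_zero] at h
  exact eq_of_add_eq_zero h

theorem s2_eq_sym {a b : F} (ha : a ≠ 0) (hb : b ≠ 0) :
    s2 1 a b = sym (Units.mk0 a ha) (Units.mk0 b hb) := by
  rw [s2, dif_pos ⟨ha, hb⟩]
  rfl

theorem s2_comm {a b : F} (ha : a ≠ 0) (hb : b ≠ 0) : s2 1 a b = s2 1 b a := by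
  rw [s2_eq_sym ha hb, s2_eq_sym hb ha]
  exact sym_comm _ _

theorem s2_eq_zero_of_dep {a b : F} (ha : a ≠ 0) (hb : b ≠ 0) (s t : F)
    (hab : b = s ^ 2 + t ^ 2 * a) : s2 1 a b = 0 := by
  rw [s2_eq_sym ha hb]
  by_cases ht : t = 0
  · have hs : s ≠ 0 := by
      intro h; apply hb; rw [hab, h, ht]; ring
    have hB : Units.mk0 b hb = Units.mk0 s hs * Units.mk0 s hs :=
      Units.ext (by simp [hab, ht]; ring)
    rw [hB, sym_mul_right]
    exact kmod_two _
  · by_cases hs : s = 0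
    · have hB : Units.mk0 b hb = Units.mk0 t ht * (Units.mk0 t ht * Units.mk0 a ha) :=
        Units.ext (by simp [hab, hs]; ring)
      rw [hB, sym_mul_right, sym_mul_right, ← add_assoc, kmod_two, zero_add]
      exact sym_self _
    · have hu : t * s⁻¹ ≠ 0 := mul_ne_zero ht (inv_ne_zero hs)
      have hr : (t * s⁻¹) ^ 2 * a ≠ 0 := mul_ne_zero (pow_ne_zero _ hu) ha
      have h1r_eq : 1 + (t * s⁻¹) ^ 2 * a = b * (s ^ 2)⁻¹ := by
        rw [hab]; field_simp
      have h1r : 1 + (t * s⁻¹) ^ 2 * a ≠ 0 := by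
        rw [h1r_eq]
        exact mul_ne_zero hb (inv_ne_zero (pow_ne_zero _ hs))
      set R : Fˣ := Units.mk0 _ hr with hR
      set W : Fˣ := Units.mk0 _ h1r with hW
      set U : Fˣ := Units.mk0 _ hu with hU
      have hst : (R : F) + (W : F) = 1 := by
        rw [hR, hW]
        simp only [Units.val_mk0]
        linear_combination ((t * s⁻¹) ^ 2 * a) * char_two_f (F := F)
      have hRW : sym R W = 0 := sym_steinberg hst
      have hRfact : R = U * (U * Units.mk0 a ha) := Units.ext (by simp [hR, hU]; ring)
      have hAW : sym (Units.mk0 a ha) W = 0 := by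
        have h := sym_mul_left U (U * Units.mk0 a ha) W
        rw [← hRfact, hRW, sym_mul_left, ← add_assoc, kmod_two, zero_add] at h
        exact h.symm
      have hB : Units.mk0 b hb = Units.mk0 s hs * (Units.mk0 s hs * W) := by
        refine Units.ext ?_
        simp only [Units.val_mul, Units.val_mk0, hW]
        rw [hab]; field_simp
      rw [hB, sym_mul_right, sym_mul_right, ← add_assoc, kmod_two, zero_add, hAW]

end MilnorAux



/-- The subfield `F²(S)` generated by the squares together with `S`. -/
def sqAdjoin (F : Type*) [Field F] (S : Set F) : Subfield F :=
  Subfield.closure ({ x : F | ∃ y : F, x = y ^ 2 } ∪ S)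

namespace MilnorAux

variable {F : Type*} [Field F]

theorem sq_mem_sqAdjoin (S : Set F) (y : F) : y ^ 2 ∈ sqAdjoin F S :=
  Subfield.subset_closure (Or.inl ⟨y, rfl⟩)

theorem mem_sqAdjoin_of_mem (S : Set F) {x : F} (hx : x ∈ S) : x ∈ sqAdjoin F S :=
  Subfield.subset_closure (Or.inr hx)

theorem sqAdjoin_mono {S T : Set F} (h : S ⊆ T) : sqAdjoin F S ≤ sqAdjoin F T :=
  Subfield.closure_mono (Set.union_subset_union_right _ h)

variable [CharP F 2]

/-- `F² + F²a` as a subfield, in characteristic 2. -/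
def sqLine (a : F) : Subfield F where
  carrier := {x | ∃ s t : F, x = s ^ 2 + t ^ 2 * a}
  zero_mem' := ⟨0, 0, by ring⟩
  one_mem' := ⟨1, 0, by ring⟩
  add_mem' := by
    rintro _ _ ⟨s, t, rfl⟩ ⟨u, v, rfl⟩
    exact ⟨s + u, t + v, by linear_combination (-(s * u + t * v * a)) * char_two_f F⟩
  neg_mem' := by
    rintro x ⟨s, t, rfl⟩
    exact ⟨s, t, by rw [CharTwo.neg_eq]⟩
  mul_mem' := by
    rintro _ _ ⟨s, t, rfl⟩ ⟨u, v, rfl⟩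
    exact ⟨s * u + t * v * a, s * v + t * u,
      by linear_combination (-(s * u * t * v * a + s * v * t * u * a)) * char_two_f F⟩
  inv_mem' := by
    rintro x ⟨s, t, hst⟩
    by_cases hx0 : x = 0
    · exact ⟨0, 0, by rw [hx0, inv_zero]; ring⟩
    · refine ⟨s * x⁻¹, t * x⁻¹, ?_⟩
      have h1 : (s * x⁻¹) ^ 2 + (t * x⁻¹) ^ 2 * a = (x⁻¹) ^ 2 * (s ^ 2 + t ^ 2 * a) := by
        ring
      rw [h1, ← hst, sq, mul_assoc, inv_mul_cancel₀ hx0, mul_one]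

theorem mem_sqAdjoin_singleton {a x : F} :
    x ∈ sqAdjoin F {a} ↔ ∃ s t : F, x = s ^ 2 + t ^ 2 * a := by
  constructor
  · intro hx
    have hle : sqAdjoin F {a} ≤ sqLine a := by
      rw [sqAdjoin, Subfield.closure_le]
      rintro z (⟨y, rfl⟩ | hz)
      · exact ⟨y, 0, by ring⟩
      · rw [Set.mem_singleton_iff] at hz
        exact ⟨0, 1, by rw [hz]; ring⟩
    exact hle hx
  · rintro ⟨s, t, rfl⟩
    exact Subfield.add_mem _ (sq_mem_sqAdjoin _ s)
      (Subfield.mul_mem _ (sq_mem_sqAdjoin _ t) (mem_sqAdjoin_of_mem _ rfl))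

theorem key {a b a' b' : F} (ha : a ≠ 0) (hb : b ≠ 0) (ha' : a' ≠ 0) (hb' : b' ≠ 0)
    (heq : s2 1 a b = s2 1 a' b') (h0 : s2 1 a b ≠ (0 : KMod F 2 1)) :
    a ∈ sqAdjoin F {a', b'} ∧ b ∈ sqAdjoin F {a', b'} := by
  have hbna : b ∉ sqAdjoin F {a} := by
    intro h
    obtain ⟨s, t, hst⟩ := mem_sqAdjoin_singleton.mp h
    exact h0 (s2_eq_zero_of_dep ha hb s t hst)
  have hanb : a ∉ sqAdjoin F {b} := by
    intro h
    obtain ⟨s, t, hst⟩ := mem_sqAdjoin_singleton.mp h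
    exact h0 (by rw [s2_comm ha hb]; exact s2_eq_zero_of_dep hb ha s t hst)
  have ha'mem : a' ∈ sqAdjoin F {a', b'} :=
    mem_sqAdjoin_of_mem _ (Set.mem_insert _ _)
  have hb'mem : b' ∈ sqAdjoin F {a', b'} :=
    mem_sqAdjoin_of_mem _ (Set.mem_insert_of_mem _ rfl)
  constructor
  · by_contra hA
    obtain ⟨D₁, h₁a, h₁m, h₁v, h₁1⟩ :=
      exists_deriv (sqAdjoin F {a', b'}) (sq_mem_sqAdjoin _) hA
    obtain ⟨D₂, h₂a, h₂m, h₂v, h₂1⟩ :=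
      exists_deriv (sqAdjoin F {a}) (sq_mem_sqAdjoin _) hbna
    obtain ⟨ψ, hψ⟩ := exists_psi D₁ D₂ h₁a h₁m h₂a h₂m
    have e1 : ψ (s2 1 a b) = a⁻¹ * b⁻¹ := by
      rw [s2_eq_sym ha hb, sym, hψ]
      simp only [Matrix.cons_val_zero, Matrix.cons_val_one, Matrix.head_cons, Ldlog,
        Units.val_mk0]
      rw [h₁1, h₂1, h₂v a (mem_sqAdjoin_of_mem _ rfl)]
      ring
    have e2 : ψ (s2 1 a' b') = 0 := by
      rw [s2_eq_sym ha' hb', sym, hψ]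
      simp only [Matrix.cons_val_zero, Matrix.cons_val_one, Matrix.head_cons, Ldlog,
        Units.val_mk0]
      rw [h₁v a' ha'mem, h₁v b' hb'mem]
      ring
    rw [heq, e2] at e1
    exact mul_ne_zero (inv_ne_zero ha) (inv_ne_zero hb) e1.symm
  · by_contra hB
    obtain ⟨D₁, h₁a, h₁m, h₁v, h₁1⟩ :=
      exists_deriv (sqAdjoin F {a', b'}) (sq_mem_sqAdjoin _) hB
    obtain ⟨D₂, h₂a, h₂m, h₂v, h₂1⟩ :=
      exists_deriv (sqAdjoin F {b}) (sq_mem_sqAdjoin _) hanb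
    obtain ⟨ψ, hψ⟩ := exists_psi D₁ D₂ h₁a h₁m h₂a h₂m
    have e1 : ψ (s2 1 a b) = a⁻¹ * b⁻¹ := by
      rw [s2_eq_sym ha hb, sym, hψ]
      simp only [Matrix.cons_val_zero, Matrix.cons_val_one, Matrix.head_cons, Ldlog,
        Units.val_mk0]
      rw [h₁1, h₂1, h₂v b (mem_sqAdjoin_of_mem _ rfl)]
      ring
    have e2 : ψ (s2 1 a' b') = 0 := by
      rw [s2_eq_sym ha' hb', sym, hψ]
      simp only [Matrix.cons_val_zero, Matrix.cons_val_one, Matrix.head_cons, Ldlog,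
        Units.val_mk0]
      rw [h₁v a' ha'mem, h₁v b' hb'mem]
      ring
    rw [heq, e2] at e1
    exact mul_ne_zero (inv_ne_zero ha) (inv_ne_zero hb) e1.symm

theorem sqAdjoin_pair_eq {a b a' b' : F} (ha : a ≠ 0) (hb : b ≠ 0) (ha' : a' ≠ 0)
    (hb' : b' ≠ 0) (heq : s2 1 a b = s2 1 a' b') (h0 : s2 1 a b ≠ (0 : KMod F 2 1)) :
    sqAdjoin F {a, b} = sqAdjoin F {a', b'} := by
  have h0' : s2 1 a' b' ≠ (0 : KMod F 2 1) := heq ▸ h0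
  have h1 := key ha hb ha' hb' heq h0
  have h2 := key ha' hb' ha hb heq.symm h0'
  apply le_antisymm
  · rw [sqAdjoin, Subfield.closure_le]
    rintro z (⟨y, rfl⟩ | hz)
    · exact sq_mem_sqAdjoin _ y
    · rcases hz with rfl | hz
      · exact h1.1
      · rw [Set.mem_singleton_iff] at hz
        subst hz
        exact h1.2
  · rw [sqAdjoin, Subfield.closure_le]
    rintro z (⟨y, rfl⟩ | hz)
    · exact sq_mem_sqAdjoin _ y
    · rcases hz with rfl | hz
      · exact h2.1
      · rw [Set.mem_singleton_iff] at hz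
        subst hz
        exact h2.2

end MilnorAux


open MilnorAux

/-- equal nonzero symbols have equal value fields:
`F²(a,b) = F²(a',b')`, `F²(c,d) = F²(c',d')`, hence
`F²(a,b,c,d) = F²(a',b',c',d')`. -/
theorem stmt10 (F : Type*) [Field F] [CharP F 2] (a b c d a' b' c' d' : F)
    (ha : a ≠ 0) (hb : b ≠ 0) (hc : c ≠ 0) (hd : d ≠ 0)
    (ha' : a' ≠ 0) (hb' : b' ≠ 0) (hc' : c' ≠ 0) (hd' : d' ≠ 0)
    (hab : s2 1 a b = s2 1 a' b') (hab0 : s2 1 a b ≠ (0 : KMod F 2 1))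
    (hcd : s2 1 c d = s2 1 c' d') (hcd0 : s2 1 c d ≠ (0 : KMod F 2 1)) :
    sqAdjoin F {a, b} = sqAdjoin F {a', b'} ∧
      sqAdjoin F {c, d} = sqAdjoin F {c', d'} ∧
      sqAdjoin F {a, b, c, d} = sqAdjoin F {a', b', c', d'} := by
  have e1 := sqAdjoin_pair_eq ha hb ha' hb' hab hab0
  have e2 := sqAdjoin_pair_eq hc hd hc' hd' hcd hcd0
  refine ⟨e1, e2, ?_⟩
  have sub1 : ({a, b} : Set F) ⊆ {a, b, c, d} := by intro z hz; rcases hz with rfl | rfl <;> simp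
  have sub2 : ({c, d} : Set F) ⊆ {a, b, c, d} := by
    intro z hz; rcases hz with rfl | rfl <;> simp
  have sub1' : ({a', b'} : Set F) ⊆ {a', b', c', d'} := by
    intro z hz; rcases hz with rfl | rfl <;> simp
  have sub2' : ({c', d'} : Set F) ⊆ {a', b', c', d'} := by
    intro z hz; rcases hz with rfl | rfl <;> simp
  apply le_antisymm
  · rw [sqAdjoin, Subfield.closure_le]
    rintro z (⟨y, rfl⟩ | hz)
    · exact sq_mem_sqAdjoin _ y
    · have key4 : z ∈ sqAdjoin F {a', b'} ∨ z ∈ sqAdjoin F {c', d'} := by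
        rcases hz with rfl | rfl | rfl | rfl
        · exact Or.inl (e1 ▸ mem_sqAdjoin_of_mem _ (by simp))
        · exact Or.inl (e1 ▸ mem_sqAdjoin_of_mem _ (by simp))
        · exact Or.inr (e2 ▸ mem_sqAdjoin_of_mem _ (by simp))
        · exact Or.inr (e2 ▸ mem_sqAdjoin_of_mem _ (by simp))
      rcases key4 with h | h
      · exact sqAdjoin_mono sub1' h
      · exact sqAdjoin_mono sub2' h
  · rw [sqAdjoin, Subfield.closure_le]
    rintro z (⟨y, rfl⟩ | hz)
    · exact sq_mem_sqAdjoin _ y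
    · have key4 : z ∈ sqAdjoin F {a, b} ∨ z ∈ sqAdjoin F {c, d} := by
        rcases hz with rfl | rfl | rfl | rfl
        · exact Or.inl (e1.symm ▸ mem_sqAdjoin_of_mem _ (by simp))
        · exact Or.inl (e1.symm ▸ mem_sqAdjoin_of_mem _ (by simp))
        · exact Or.inr (e2.symm ▸ mem_sqAdjoin_of_mem _ (by simp))
        · exact Or.inr (e2.symm ▸ mem_sqAdjoin_of_mem _ (by simp))
      rcases key4 with h | h
      · exact sqAdjoin_mono sub1 h
      · exact sqAdjoin_mono sub2 h
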